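/- The change sequence for the shortest Ziggu solution has length 6·2^n - 3n - 6. Precisely, define lists S(n) and C(n) by S(1) = C(1) = [1,1,1], and for n ≥ 2: C(n) = [n] ++ C(n-1) ++ [n] ++ C(n-1) ++ [n] and S(n) = S(n-1) ++ C(n). Then the length of S(n) is 6·2^n - 3n - 6 for all n ≥ 1. -/

import Mathlib

theorem shortest_ziggu_change_sequence_length (S C : ℕ → List ℕ)
    (hS1 : S 1 = [1, 1, 1]) (hC1 : C 1 = [1, 1, 1])
    (hCrec : ∀ n, 2 ≤ n → C n = [n] ++ C (n - 1) ++ [n] ++ C (n - 1) ++ [n])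
    (hSrec : ∀ n, 2 ≤ n → S n = S (n - 1) ++ C n) :
    ∀ n, 1 ≤ n → (S n).length = 6 * 2 ^ n - 3 * n - 6 := by
  have hC : ∀ n, 1 ≤ n → (C n).length = 3 * 2 ^ n - 3 := by
    intro n
    induction n with
    | zero => omega
    | succ m ih =>
      intro _
      rcases Nat.eq_zero_or_pos m with h | h
      · subst h; rw [hC1]; simp
      · have h2 : 2 ≤ m + 1 := by omega
        rw [hCrec (m + 1) h2]
        simp only [Nat.add_sub_cancel, List.length_append, List.length_cons,
          List.length_nil]
        have := ih (by omega)
        have hp : 3 ≤ 3 * 2 ^ m := by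
          have : 1 ≤ 2 ^ m := Nat.one_le_two_pow
          omega
        rw [this, pow_succ]
        omega
  intro n
  induction n with
  | zero => omega
  | succ m ih =>
    intro _
    rcases Nat.eq_zero_or_pos m with h | h
    · subst h; rw [hS1]; simp
    · have h2 : 2 ≤ m + 1 := by omega
      rw [hSrec (m + 1) h2]
      simp only [Nat.add_sub_cancel, List.length_append]
      rw [ih (by omega), hC (m + 1) (by omega)]
      have hp : 2 ≤ 2 ^ m := Nat.one_lt_two_pow_iff.mpr (by omega)
      rw [pow_succ]
      have hm : m < 2 ^ m := Nat.lt_two_pow_self (n := m)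
      have h6 : 6 + 3 * m ≤ 6 * 2 ^ m := by nlinarith
      omega
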